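/- Let T* = (t*_1, ..., t*_B) be a welfare-optimal non-overlapping testing regime and let α ∈ (0,1). For any test t*_j and any subset S ⊊ t*_j, if prod_{i in S} q_i < α then prod_{i in t*_j \ S} q_i ≥ 1 − α. -/

import Mathlib

open Finset

/-- Probability of a health realization `ω` (true = healthy) under independent
healthy-probabilities `q`. -/
noncomputable def healthProb {n : ℕ} (q : Fin n → ℝ) (ω : Fin n → Bool) : ℝ :=
  ∏ i, if ω i then q i else 1 - q i

/-- Probability that individual `i` lies in at least one negative test of the regime `T`. -/
noncomputable def inNegProb {n B : ℕ} (q : Fin n → ℝ) (T : Fin B → Finset (Fin n))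
    (i : Fin n) : ℝ :=
  ∑ ω : Fin n → Bool,
    if ∃ j, i ∈ T j ∧ ∀ k ∈ T j, ω k = true then healthProb q ω else 0

/-- Expected welfare of a (possibly overlapping) testing regime `T`. -/
noncomputable def welfare {n B : ℕ} (q u : Fin n → ℝ) (T : Fin B → Finset (Fin n)) : ℝ :=
  ∑ i, u i * inNegProb q T i

/-- Stand-alone expected welfare of a single pooled test `t`. -/
noncomputable def testWelfare {n : ℕ} (q u : Fin n → ℝ) (t : Finset (Fin n)) : ℝ :=
  (∏ i ∈ t, q i) * ∑ i ∈ t, u i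

/-- Welfare of a non-overlapping testing regime, as a sum of stand-alone test welfares. -/
noncomputable def noWelfare {n B : ℕ} (q u : Fin n → ℝ) (T : Fin B → Finset (Fin n)) : ℝ :=
  ∑ j, testWelfare q u (T j)

/-- Probability that test `T j` is pivotal for individual `i`: `i ∈ T j`, test `T j` is
negative, and every earlier test containing `i` is positive. -/
noncomputable def pivotalProb {n B : ℕ} (q : Fin n → ℝ) (T : Fin B → Finset (Fin n))
    (i : Fin n) (j : Fin B) : ℝ :=
  ∑ ω : Fin n → Bool,
    if i ∈ T j ∧ (∀ k ∈ T j, ω k = true) ∧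
        (∀ j' : Fin B, j' < j → i ∈ T j' → ∃ k ∈ T j', ω k = false)
      then healthProb q ω else 0


open Finset

lemma noWelfare_update {n B : ℕ} (q u : Fin n → ℝ) (T : Fin B → Finset (Fin n))
    (j : Fin B) (t : Finset (Fin n)) :
    noWelfare q u (Function.update T j t)
      = noWelfare q u T - testWelfare q u (T j) + testWelfare q u t := by
  unfold noWelfare
  have h : ∀ k : Fin B, testWelfare q u (Function.update T j t k)
      = Function.update (fun k => testWelfare q u (T k)) j (testWelfare q u t) k := by
    intro k
    by_cases h : k = j <;> simp [Function.update, h]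
  simp_rw [h]
  rw [Finset.sum_update_of_mem (mem_univ j),
    ← Finset.add_sum_erase _ (fun k => testWelfare q u (T k)) (mem_univ j),
    Finset.sdiff_singleton_eq_erase]
  ring

lemma swap_le {n B G : ℕ} (q u : Fin n → ℝ)
    (T : Fin B → Finset (Fin n))
    (hdisj : ∀ j k, j ≠ k → Disjoint (T j) (T k)) (hsize : ∀ j, (T j).card ≤ G)
    (hopt : ∀ T' : Fin B → Finset (Fin n),
      (∀ j k, j ≠ k → Disjoint (T' j) (T' k)) → (∀ j, (T' j).card ≤ G) →
        noWelfare q u T' ≤ noWelfare q u T)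
    (j : Fin B) (t : Finset (Fin n)) (ht : t ⊆ T j) :
    testWelfare q u t ≤ testWelfare q u (T j) := by
  have key := hopt (Function.update T j t) ?_ ?_
  · rw [noWelfare_update] at key; linarith
  · intro k k' hkk'
    by_cases h1 : k = j <;> by_cases h2 : k' = j
    · exact absurd (h1.trans h2.symm) hkk'
    · have e1 : Function.update T j t k = t := by rw [h1]; simp
      have e2 : Function.update T j t k' = T k' := Function.update_of_ne h2 _ _
      rw [e1, e2]
      exact (hdisj j k' (fun h => h2 h.symm)).mono_left ht
    · have e1 : Function.update T j t k' = t := by rw [h2]; simp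
      have e2 : Function.update T j t k = T k := Function.update_of_ne h1 _ _
      rw [e1, e2]
      exact (hdisj k j h1).mono_right ht
    · rw [Function.update_of_ne h1, Function.update_of_ne h2]
      exact hdisj k k' hkk'
  · intro k
    by_cases h : k = j
    · have e : Function.update T j t k = t := by rw [h]; simp
      rw [e]; exact le_trans (card_le_card ht) (hsize j)
    · rw [Function.update_of_ne h]; exact hsize k

theorem stmt2 {n B G : ℕ} (q u : Fin n → ℝ)
    (hq : ∀ i, 0 < q i ∧ q i ≤ 1) (hu : ∀ i, 0 < u i)
    (T : Fin B → Finset (Fin n))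
    (hdisj : ∀ j k, j ≠ k → Disjoint (T j) (T k)) (hsize : ∀ j, (T j).card ≤ G)
    (hopt : ∀ T' : Fin B → Finset (Fin n),
      (∀ j k, j ≠ k → Disjoint (T' j) (T' k)) → (∀ j, (T' j).card ≤ G) →
        noWelfare q u T' ≤ noWelfare q u T)
    (α : ℝ) (hα : 0 < α ∧ α < 1)
    (j : Fin B) (S : Finset (Fin n)) (hS : S ⊂ T j)
    (hqS : ∏ i ∈ S, q i < α) :
    1 - α ≤ ∏ i ∈ T j \ S, q i := by
  obtain ⟨hα0, hα1⟩ := hα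
  have h1 := swap_le q u T hdisj hsize hopt j (T j \ S) sdiff_subset
  have h2 := swap_le q u T hdisj hsize hopt j S hS.subset
  have hqSpos : 0 < ∏ i ∈ S, q i := prod_pos (fun i _ => (hq i).1)
  have hqCpos : 0 < ∏ i ∈ T j \ S, q i := prod_pos (fun i _ => (hq i).1)
  have hsplit : (∏ i ∈ T j \ S, q i) * ∏ i ∈ S, q i = ∏ i ∈ T j, q i :=
    prod_sdiff hS.subset
  have hsum : (∑ i ∈ T j \ S, u i) + ∑ i ∈ S, u i = ∑ i ∈ T j, u i :=
    sum_sdiff hS.subset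
  obtain ⟨x, hxT, hxS⟩ := exists_of_ssubset hS
  have hCpos : 0 < ∑ i ∈ T j \ S, u i :=
    sum_pos (fun i _ => hu i) ⟨x, mem_sdiff.2 ⟨hxT, hxS⟩⟩
  have hA : 0 ≤ ∑ i ∈ S, u i := sum_nonneg (fun i _ => (hu i).le)
  unfold testWelfare at h1 h2
  rw [← hsplit, ← hsum] at h1 h2
  set A := ∑ i ∈ S, u i
  set C := ∑ i ∈ T j \ S, u i
  set qS := ∏ i ∈ S, q i
  set qC := ∏ i ∈ T j \ S, q i
  -- h1 : qC * C ≤ qC * qS * (C + A), h2 : qS * A ≤ qC * qS * (C + A)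
  have h1' : C ≤ qS * (C + A) := by
    have := (mul_le_mul_iff_of_pos_left hqCpos).mp (by linarith [h1] : qC * C ≤ qC * (qS * (C + A)))
    exact this
  have h2' : A ≤ qC * (C + A) := by
    have := (mul_le_mul_iff_of_pos_left hqSpos).mp (by linarith [h2] : qS * A ≤ qS * (qC * (C + A)))
    exact this
  nlinarith [h1', h2', hCpos, hA, hqS, hqCpos]
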